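/- For every ε > 0 there exists N such that for all integers n ≥ N and k ≥ N, the standard grid Γ_n satisfies cov_k(Γ_n) ≤ (√2 + ε) · k(n−1). -/

import Mathlib

open scoped Classical

/-- An affine line in `ℝ²`, given by the equation `a * x + b * y = c` with `(a, b) ≠ (0, 0)`. -/
structure Line2 where
  a : ℝ
  b : ℝ
  c : ℝ
  nondeg : a ≠ 0 ∨ b ≠ 0

/-- Membership of a point on a line. -/
def Line2.Mem (l : Line2) (p : ℝ × ℝ) : Prop :=
  l.a * p.1 + l.b * p.2 = l.c

/-- `L` is a `k`-cover of `Γ`: a multiset of lines, none through the origin, such that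
every point of `Γ` other than the origin lies on at least `k` lines (with multiplicity). -/
def IsKCover (Γ : Set (ℝ × ℝ)) (k : ℕ) (L : Multiset Line2) : Prop :=
  (∀ l ∈ L, ¬ l.Mem (0, 0)) ∧
    ∀ p ∈ Γ, p ≠ (0, 0) → k ≤ (L.filter (fun l => l.Mem p)).card

/-- The minimum cardinality of a `k`-cover of `Γ`. -/
noncomputable def cov (Γ : Set (ℝ × ℝ)) (k : ℕ) : ℕ :=
  sInf {m | ∃ L : Multiset Line2, IsKCover Γ k L ∧ Multiset.card L = m}

/-- The standard grid `{0, 1, …, n-1} × {0, 1, …, n-1} ⊆ ℝ²`. -/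
def stdGrid (n : ℕ) : Set (ℝ × ℝ) :=
  {p : ℝ × ℝ | ∃ i < n, ∃ j < n, p = ((i : ℝ), (j : ℝ))}

namespace Stmt7Aux

noncomputable def TT (m : ℕ) : ℝ := Real.sqrt 2 * m

def vln (c : ℕ) : Line2 := ⟨1, 0, (c : ℝ), Or.inl one_ne_zero⟩
def hln (c : ℕ) : Line2 := ⟨0, 1, (c : ℝ), Or.inr one_ne_zero⟩
def dln (c : ℕ) : Line2 := ⟨1, 1, (c : ℝ), Or.inl one_ne_zero⟩

noncomputable def vmul (m k i : ℕ) : ℕ := ⌈((k : ℝ) * i / TT m)⌉₊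
noncomputable def dmul (m k s : ℕ) : ℕ := ⌈((k : ℝ) * (TT m - s) / TT m)⌉₊

noncomputable def LL (m k : ℕ) : Multiset Line2 :=
  (∑ i ∈ Finset.Icc 1 m, Multiset.replicate (vmul m k i) (vln i))
  + (∑ j ∈ Finset.Icc 1 m, Multiset.replicate (vmul m k j) (hln j))
  + (∑ s ∈ Finset.Icc 1 (2*m), Multiset.replicate (dmul m k s) (dln s))

lemma countP_finset_sum {ι α : Type*} (p : α → Prop) [DecidablePred p]
    (s : Finset ι) (f : ι → Multiset α) :
    Multiset.countP p (∑ i ∈ s, f i) = ∑ i ∈ s, Multiset.countP p (f i) := by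
  induction s using Finset.induction_on with
  | empty => simp
  | insert _ _ h ih => simp [Finset.sum_insert h, Multiset.countP_add, ih]

lemma card_finset_sum {ι α : Type*} (s : Finset ι) (f : ι → Multiset α) :
    Multiset.card (∑ i ∈ s, f i) = ∑ i ∈ s, Multiset.card (f i) := by
  induction s using Finset.induction_on with
  | empty => simp
  | insert _ _ h ih => simp [Finset.sum_insert h, ih]

lemma countP_replicate {α : Type*} (p : α → Prop) [DecidablePred p] (n : ℕ) (a : α) :
    Multiset.countP p (Multiset.replicate n a) = if p a then n else 0 := by
  induction n with
  | zero => simp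
  | succ n ih =>
      rw [Multiset.replicate_succ, Multiset.countP_cons, ih]
      by_cases h : p a <;> simp [h]

lemma hTpos {m : ℕ} (hm : 1 ≤ m) : 0 < TT m := by
  have : (0:ℝ) < Real.sqrt 2 := Real.sqrt_pos.mpr (by norm_num)
  have hm' : (0:ℝ) < m := by exact_mod_cast hm
  exact mul_pos this hm'

lemma key (m k : ℕ) (hm : 1 ≤ m) (i j : ℕ) (hij : ¬ (i = 0 ∧ j = 0)) :
    k ≤ vmul m k i + vmul m k j + dmul m k (i + j) := by
  have hT := hTpos hm
  have hid : ((k : ℝ) * i / TT m) + ((k : ℝ) * j / TT m)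
      + ((k : ℝ) * (TT m - (i + j : ℕ)) / TT m) = k := by
    push_cast
    field_simp
    ring
  have h1 := Nat.le_ceil ((k : ℝ) * i / TT m)
  have h2 := Nat.le_ceil ((k : ℝ) * j / TT m)
  have h3 := Nat.le_ceil ((k : ℝ) * (TT m - (i + j : ℕ)) / TT m)
  have : (k : ℝ) ≤ (vmul m k i : ℝ) + (vmul m k j : ℝ) + (dmul m k (i + j) : ℝ) := by
    rw [← hid]; exact add_le_add (add_le_add h1 h2) h3
  exact_mod_cast this

lemma vmul_zero (m k : ℕ) : vmul m k 0 = 0 := by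
  simp [vmul]

lemma cover (m k : ℕ) (hm : 1 ≤ m) : IsKCover (stdGrid (m + 1)) k (LL m k) := by
  constructor
  · intro l hl
    have : ∃ c : ℕ, 1 ≤ c ∧ (l = vln c ∨ l = hln c ∨ l = dln c) := by
      rcases Multiset.mem_add.1 hl with hl | hl
      · rcases Multiset.mem_add.1 hl with hl | hl
        · rcases Multiset.mem_sum.1 hl with ⟨i, hi, hi2⟩
          exact ⟨i, (Finset.mem_Icc.1 hi).1, Or.inl (Multiset.eq_of_mem_replicate hi2)⟩
        · rcases Multiset.mem_sum.1 hl with ⟨i, hi, hi2⟩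
          exact ⟨i, (Finset.mem_Icc.1 hi).1, Or.inr (Or.inl (Multiset.eq_of_mem_replicate hi2))⟩
      · rcases Multiset.mem_sum.1 hl with ⟨i, hi, hi2⟩
        exact ⟨i, (Finset.mem_Icc.1 hi).1, Or.inr (Or.inr (Multiset.eq_of_mem_replicate hi2))⟩
    rcases this with ⟨c, hc, h | h | h⟩ <;> subst h <;>
      · intro hmem
        simp [vln, hln, dln, Line2.Mem] at hmem
        rw [show ((0:ℝ) = (c:ℝ)) ↔ ((0:ℕ) = c) from by exact_mod_cast Iff.rfl] at hmem
        omega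
  · rintro p hp hp0
    obtain ⟨i, hi, j, hj, rfl⟩ := hp
    have hij : ¬ (i = 0 ∧ j = 0) := by
      rintro ⟨rfl, rfl⟩; exact hp0 (by norm_num)
    rw [← Multiset.countP_eq_card_filter]
    unfold LL
    rw [Multiset.countP_add, Multiset.countP_add, countP_finset_sum, countP_finset_sum,
      countP_finset_sum]
    have hv : ∀ c : ℕ, (vln c).Mem ((i:ℝ), (j:ℝ)) ↔ c = i := by
      intro c; simp [vln, Line2.Mem]; constructor <;> intro h <;> [exact_mod_cast h.symm; exact_mod_cast h.symm]
    have hh : ∀ c : ℕ, (hln c).Mem ((i:ℝ), (j:ℝ)) ↔ c = j := by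
      intro c; simp [hln, Line2.Mem]; constructor <;> intro h <;> [exact_mod_cast h.symm; exact_mod_cast h.symm]
    have hd : ∀ c : ℕ, (dln c).Mem ((i:ℝ), (j:ℝ)) ↔ c = i + j := by
      intro c; simp [dln, Line2.Mem]; constructor <;> intro h
      · exact_mod_cast h.symm
      · rw [h]; push_cast; ring
    have e1 : ∑ c ∈ Finset.Icc 1 m,
        Multiset.countP (fun l => l.Mem ((i:ℝ), (j:ℝ))) (Multiset.replicate (vmul m k c) (vln c))
        = if i ∈ Finset.Icc 1 m then vmul m k i else 0 := by
      rw [← Finset.sum_ite_eq' (Finset.Icc 1 m) i (fun c => vmul m k c)]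
      refine Finset.sum_congr rfl fun c _ => ?_
      rw [countP_replicate]
      exact if_congr (hv c) rfl rfl
    have e2 : ∑ c ∈ Finset.Icc 1 m,
        Multiset.countP (fun l => l.Mem ((i:ℝ), (j:ℝ))) (Multiset.replicate (vmul m k c) (hln c))
        = if j ∈ Finset.Icc 1 m then vmul m k j else 0 := by
      rw [← Finset.sum_ite_eq' (Finset.Icc 1 m) j (fun c => vmul m k c)]
      refine Finset.sum_congr rfl fun c _ => ?_
      rw [countP_replicate]
      exact if_congr (hh c) rfl rfl
    have e3 : ∑ c ∈ Finset.Icc 1 (2*m),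
        Multiset.countP (fun l => l.Mem ((i:ℝ), (j:ℝ))) (Multiset.replicate (dmul m k c) (dln c))
        = if i + j ∈ Finset.Icc 1 (2*m) then dmul m k (i+j) else 0 := by
      rw [← Finset.sum_ite_eq' (Finset.Icc 1 (2*m)) (i+j) (fun c => dmul m k c)]
      refine Finset.sum_congr rfl fun c _ => ?_
      rw [countP_replicate]
      exact if_congr (hd c) rfl rfl
    rw [e1, e2, e3]
    have him : i ≤ m := by omega
    have hjm : j ≤ m := by omega
    have hdmem : i + j ∈ Finset.Icc 1 (2*m) := Finset.mem_Icc.2 ⟨by omega, by omega⟩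
    rw [if_pos hdmem]
    have hvi : (if i ∈ Finset.Icc 1 m then vmul m k i else 0) = vmul m k i := by
      by_cases h : i ∈ Finset.Icc 1 m
      · rw [if_pos h]
      · rw [if_neg h]
        have : i = 0 := by simp [Finset.mem_Icc] at h; omega
        rw [this, vmul_zero]
    have hvj : (if j ∈ Finset.Icc 1 m then vmul m k j else 0) = vmul m k j := by
      by_cases h : j ∈ Finset.Icc 1 m
      · rw [if_pos h]
      · rw [if_neg h]
        have : j = 0 := by simp [Finset.mem_Icc] at h; omega
        rw [this, vmul_zero]
    rw [hvi, hvj]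
    exact key m k hm i j hij

end Stmt7Aux

namespace Stmt7Aux

lemma sum_Icc_real (m : ℕ) : ∑ i ∈ Finset.Icc 1 m, (i:ℝ) = m*(m+1)/2 := by
  induction m with
  | zero => simp
  | succ m ih =>
      rw [Finset.sum_Icc_succ_top (by omega : 1 ≤ m+1), ih]
      push_cast; ring

lemma tele (T : ℝ) (hT : 0 ≤ T) (M : ℕ) :
    ∑ s ∈ Finset.Icc 1 M, max 0 (T - (s:ℝ)) ≤ T^2/2 := by
  set F : ℕ → ℝ := fun t => (max 0 (T - t))^2/2 with hF
  have hFnn : ∀ t, 0 ≤ F t := fun t => by positivity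
  have step : ∀ t : ℕ, max 0 (T - ((t:ℝ)+1)) ≤ F t - F (t+1) := by
    intro t
    by_cases h : T - ((t:ℝ)+1) ≤ 0
    · rw [max_eq_left h]
      have : F (t+1) = 0 := by
        simp only [hF]
        push_cast
        rw [max_eq_left h]
        norm_num
      rw [this, sub_zero]
      exact hFnn t
    · push_neg at h
      have hb : max 0 (T - ((t:ℝ)+1)) = T - ((t:ℝ)+1) := max_eq_right (le_of_lt h)
      have ha : max 0 (T - (t:ℝ)) = T - (t:ℝ) := max_eq_right (by linarith)
      simp only [hF]
      push_cast
      rw [hb, ha]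
      nlinarith
  calc ∑ s ∈ Finset.Icc 1 M, max 0 (T - (s:ℝ))
      = ∑ t ∈ Finset.range M, max 0 (T - ((1+t : ℕ):ℝ)) := by
        rw [← Finset.Ico_add_one_right_eq_Icc, Finset.sum_Ico_eq_sum_range]
        simp
    _ ≤ ∑ t ∈ Finset.range M, (F t - F (t+1)) := by
        refine Finset.sum_le_sum fun t _ => ?_
        have := step t
        push_cast
        rw [add_comm (1:ℝ)]; exact this
    _ = F 0 - F M := Finset.sum_range_sub' F M
    _ ≤ F 0 := by linarith [hFnn M]
    _ = T^2/2 := by simp only [hF]; norm_num; rw [max_eq_right hT]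

lemma card_bound (m k : ℕ) (hm : 1 ≤ m) :
    ((LL m k).card : ℝ) ≤ Real.sqrt 2 * k * m + k / Real.sqrt 2 + 4*m := by
  have hT := hTpos hm
  have hs2 : Real.sqrt 2 ^ 2 = 2 := Real.sq_sqrt (by norm_num)
  have hs2' : (0:ℝ) < Real.sqrt 2 := Real.sqrt_pos.mpr (by norm_num)
  have hm' : (0:ℝ) < m := by exact_mod_cast hm
  have hcard : ((LL m k).card : ℝ)
      = (∑ i ∈ Finset.Icc 1 m, (vmul m k i : ℝ)) * 2
        + ∑ s ∈ Finset.Icc 1 (2*m), (dmul m k s : ℝ) := by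
    unfold LL
    rw [Multiset.card_add, Multiset.card_add, card_finset_sum, card_finset_sum, card_finset_sum]
    push_cast [Multiset.card_replicate]
    ring
  have hV : ∑ i ∈ Finset.Icc 1 m, (vmul m k i : ℝ)
      ≤ (k:ℝ)/TT m * ((m:ℝ)*(m+1)/2) + m := by
    have : ∀ i ∈ Finset.Icc 1 m, (vmul m k i : ℝ) ≤ (k:ℝ)*i/TT m + 1 := by
      intro i _
      exact le_of_lt (Nat.ceil_lt_add_one (by positivity))
    calc ∑ i ∈ Finset.Icc 1 m, (vmul m k i : ℝ)
        ≤ ∑ i ∈ Finset.Icc 1 m, ((k:ℝ)*i/TT m + 1) := Finset.sum_le_sum this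
      _ = (k:ℝ)/TT m * ((m:ℝ)*(m+1)/2) + m := by
          rw [Finset.sum_add_distrib, Finset.sum_const, Nat.card_Icc]
          rw [show ∑ i ∈ Finset.Icc 1 m, (k:ℝ)*i/TT m
              = (k:ℝ)/TT m * ∑ i ∈ Finset.Icc 1 m, (i:ℝ) from by
            rw [Finset.mul_sum]; exact Finset.sum_congr rfl fun i _ => by ring]
          rw [sum_Icc_real]
          simp
  have hD : ∑ s ∈ Finset.Icc 1 (2*m), (dmul m k s : ℝ)
      ≤ (k:ℝ)/TT m * (TT m^2/2) + 2*m := by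
    have hterm : ∀ s ∈ Finset.Icc 1 (2*m),
        (dmul m k s : ℝ) ≤ (k:ℝ)/TT m * max 0 (TT m - s) + 1 := by
      intro s _
      have hy : (0:ℝ) ≤ (k:ℝ)/TT m * max 0 (TT m - s) := by positivity
      have hxy : (k:ℝ) * (TT m - s) / TT m ≤ (k:ℝ)/TT m * max 0 (TT m - s) := by
        rw [show (k:ℝ) * (TT m - s) / TT m = (k:ℝ)/TT m * (TT m - s) from by ring]
        exact mul_le_mul_of_nonneg_left (le_max_right _ _) (by positivity)
      have := Nat.ceil_le_ceil hxy
      calc (dmul m k s : ℝ) ≤ (⌈(k:ℝ)/TT m * max 0 (TT m - s)⌉₊ : ℝ) := by exact_mod_cast this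
        _ ≤ (k:ℝ)/TT m * max 0 (TT m - s) + 1 := le_of_lt (Nat.ceil_lt_add_one hy)
    calc ∑ s ∈ Finset.Icc 1 (2*m), (dmul m k s : ℝ)
        ≤ ∑ s ∈ Finset.Icc 1 (2*m), ((k:ℝ)/TT m * max 0 (TT m - s) + 1) :=
          Finset.sum_le_sum hterm
      _ = (k:ℝ)/TT m * (∑ s ∈ Finset.Icc 1 (2*m), max 0 (TT m - s)) + 2*m := by
          rw [Finset.sum_add_distrib, Finset.sum_const, Nat.card_Icc, Finset.mul_sum]
          simp
      _ ≤ (k:ℝ)/TT m * (TT m^2/2) + 2*m :=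
          add_le_add_left (mul_le_mul_of_nonneg_left (tele (TT m) (le_of_lt hT) (2*m))
            (by positivity)) _
  have halg : ((k:ℝ)/TT m * ((m:ℝ)*(m+1)/2) + m) * 2 + ((k:ℝ)/TT m * (TT m^2/2) + 2*m)
      = Real.sqrt 2 * k * m + k / Real.sqrt 2 + 4*m := by
    rw [TT]
    field_simp
    linear_combination (-((k:ℝ) * (m:ℝ))) * hs2
  calc ((LL m k).card : ℝ)
      = (∑ i ∈ Finset.Icc 1 m, (vmul m k i : ℝ)) * 2
        + ∑ s ∈ Finset.Icc 1 (2*m), (dmul m k s : ℝ) := hcard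
    _ ≤ ((k:ℝ)/TT m * ((m:ℝ)*(m+1)/2) + m) * 2 + ((k:ℝ)/TT m * (TT m^2/2) + 2*m) := by
        gcongr
    _ = Real.sqrt 2 * k * m + k / Real.sqrt 2 + 4*m := halg

end Stmt7Aux
open Stmt7Aux

theorem stmt7 :
    ∀ ε : ℝ, 0 < ε → ∃ N : ℕ, ∀ n : ℕ, N ≤ n → ∀ k : ℕ, N ≤ k →
      (cov (stdGrid n) k : ℝ) ≤ (Real.sqrt 2 + ε) * ((k : ℝ) * ((n : ℝ) - 1)) := by
  intro ε hε
  refine ⟨max 2 (⌈(8:ℝ)/ε⌉₊ + 1), fun n hn k hk => ?_⟩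
  have hn2 : 2 ≤ n := le_trans (le_max_left _ _) hn
  have hk2 : ⌈(8:ℝ)/ε⌉₊ + 1 ≤ k := le_trans (le_max_right _ _) hk
  have hnceil : ⌈(8:ℝ)/ε⌉₊ + 1 ≤ n := le_trans (le_max_right _ _) hn
  set m := n - 1 with hmdef
  have hm1 : 1 ≤ m := by omega
  have hnm : n = m + 1 := by omega
  have hcov : cov (stdGrid n) k ≤ Multiset.card (LL m k) := by
    apply Nat.sInf_le
    exact ⟨LL m k, by rw [hnm]; exact cover m k hm1, rfl⟩
  have hcb := card_bound m k hm1
  have hmr : ((m:ℝ)) = (n:ℝ) - 1 := by rw [hnm]; push_cast; ring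
  have hs2' : (0:ℝ) < Real.sqrt 2 := Real.sqrt_pos.mpr (by norm_num)
  have hs2 : Real.sqrt 2 ^ 2 = 2 := Real.sq_sqrt (by norm_num)
  have h1le : (1:ℝ) ≤ Real.sqrt 2 := by nlinarith [Real.sqrt_nonneg 2]
  have hk0 : (0:ℝ) ≤ k := Nat.cast_nonneg k
  have hm0 : (0:ℝ) ≤ m := Nat.cast_nonneg m
  have hεk : (8:ℝ) ≤ ε * k := by
    have h8 : (8:ℝ)/ε ≤ k := by
      calc (8:ℝ)/ε ≤ (⌈(8:ℝ)/ε⌉₊ : ℝ) := Nat.le_ceil _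
        _ ≤ k := by exact_mod_cast Nat.le_of_succ_le hk2
    calc (8:ℝ) = ε * ((8:ℝ)/ε) := by field_simp
      _ ≤ ε * k := mul_le_mul_of_nonneg_left h8 (le_of_lt hε)
  have hεm : (8:ℝ) ≤ ε * m := by
    have h8 : (8:ℝ)/ε ≤ m := by
      calc (8:ℝ)/ε ≤ (⌈(8:ℝ)/ε⌉₊ : ℝ) := Nat.le_ceil _
        _ ≤ m := by
          have : ⌈(8:ℝ)/ε⌉₊ ≤ m := by omega
          exact_mod_cast this
    calc (8:ℝ) = ε * ((8:ℝ)/ε) := by field_simp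
      _ ≤ ε * m := mul_le_mul_of_nonneg_left h8 (le_of_lt hε)
  have hdiv : (k:ℝ) / Real.sqrt 2 ≤ k := div_le_self hk0 h1le
  have hA : 8 * (k:ℝ) ≤ ε * (m:ℝ) * k := mul_le_mul_of_nonneg_right hεm hk0
  have hB : 8 * (m:ℝ) ≤ ε * (k:ℝ) * m := mul_le_mul_of_nonneg_right hεk hm0
  have hC : (0:ℝ) ≤ ε * k * m := by positivity
  calc (cov (stdGrid n) k : ℝ) ≤ (Multiset.card (LL m k) : ℝ) := by exact_mod_cast hcov
    _ ≤ Real.sqrt 2 * k * m + k / Real.sqrt 2 + 4*m := hcb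
    _ ≤ Real.sqrt 2 * k * m + ε * k * m := by nlinarith
    _ = (Real.sqrt 2 + ε) * ((k : ℝ) * ((n:ℝ) - 1)) := by rw [← hmr]; ring
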